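/- Let G be a generalized tournament graph on n vertices. Then (1/3) · sum over vertices c of C(deg_in(c) + deg_out(c), 2) ≤ |T_2| + |T_3|, where T_i is the set of triads covered by exactly i directed edges. -/

import Mathlib

/-- Number of directed edges incident to a vertex. -/
noncomputable def degDir {V : Type*} (d : V → V → Prop) (c : V) : ℕ :=
  {b : V | d b c ∨ d c b}.ncard

/-- Number of directed edges covering a triad `t`. -/
noncomputable def covCount {V : Type*} (d : V → V → Prop) (t : Finset V) : ℕ :=
  {p : V × V | p.1 ∈ t ∧ p.2 ∈ t ∧ d p.1 p.2}.ncard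

theorem sum_choose_degDir_le {V : Type*} [Fintype V] (d : V → V → Prop)
    (hirr : ∀ v : V, ¬ d v v)
    (hasym : ∀ x y : V, d x y → ¬ d y x) :
    ∑ c : V, Nat.choose (degDir d c) 2 ≤
      3 * ({t : Finset V | t.card = 3 ∧ covCount d t = 2}.ncard +
        {t : Finset V | t.card = 3 ∧ covCount d t = 3}.ncard) := by
  classical
  set N : V → Finset V := fun c => Finset.univ.filter (fun b => d b c ∨ d c b) with hN
  have hdeg : ∀ c, degDir d c = (N c).card := by
    intro c
    rw [degDir, Set.ncard_eq_toFinset_card']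
    simp [hN]
  have hmemN : ∀ c b, b ∈ N c ↔ (d b c ∨ d c b) := by
    intro c b; simp [hN]
  have hcnotN : ∀ c, c ∉ N c := by
    intro c h
    rcases (hmemN c c).1 h with h' | h' <;> exact hirr c h'
  -- covCount as a Finset card
  set D : Finset V → Finset (V × V) :=
    fun t => Finset.univ.filter (fun p : V × V => p.1 ∈ t ∧ p.2 ∈ t ∧ d p.1 p.2) with hD
  have hcov : ∀ t, covCount d t = (D t).card := by
    intro t
    rw [covCount, Set.ncard_eq_toFinset_card']
    simp [hD]
  -- upper bound on covCount for triads
  have hcov_le : ∀ t : Finset V, t.card = 3 → covCount d t ≤ 3 := by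
    intro t ht
    rw [hcov]
    have : (D t).card ≤ (t.powersetCard 2).card := by
      apply Finset.card_le_card_of_injOn (fun p => ({p.1, p.2} : Finset V))
      · intro p hp
        simp only [hD, Finset.mem_coe, Finset.mem_filter] at hp
        rw [Finset.mem_coe, Finset.mem_powersetCard]
        have hne : p.1 ≠ p.2 := fun h => hirr p.1 (h ▸ hp.2.2.2)
        constructor
        · intro x hx
          rcases Finset.mem_insert.1 hx with h | h
          · exact h ▸ hp.2.1
          · exact (Finset.mem_singleton.1 h) ▸ hp.2.2.1
        · rw [Finset.card_insert_of_notMem (by simp [hne]), Finset.card_singleton]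
      · intro p hp q hq hpq
        simp only [hD, Finset.mem_coe, Finset.mem_filter] at hp hq
        have hne : p.1 ≠ p.2 := fun h => hirr p.1 (h ▸ hp.2.2.2)
        have hpq' : ({p.1, p.2} : Finset V) = {q.1, q.2} := hpq
        have h1 : p.1 ∈ ({q.1, q.2} : Finset V) := by rw [← hpq']; simp
        have h2 : p.2 ∈ ({q.1, q.2} : Finset V) := by rw [← hpq']; simp
        simp only [Finset.mem_insert, Finset.mem_singleton] at h1 h2
        rcases h1 with h1 | h1
        · rcases h2 with h2 | h2
          · exact absurd (h1 ▸ h2 ▸ rfl) hne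
          · exact Prod.ext h1 h2
        · rcases h2 with h2 | h2
          · exact absurd hq.2.2.2 (h1 ▸ h2 ▸ hasym _ _ hp.2.2.2)
          · exact absurd (h1 ▸ h2 ▸ rfl) hne
    rw [Finset.card_powersetCard, ht] at this
    simpa using this
  -- lower bound on covCount for triads coming from cherries
  have hcov_ge : ∀ c : V, ∀ s : Finset V, s ⊆ N c → s.card = 2 →
      2 ≤ covCount d (insert c s) := by
    intro c s hs hs2
    rw [hcov]
    have hcs : c ∉ s := fun h => hcnotN c (hs h)
    have : s.card ≤ (D (insert c s)).card := by
      apply Finset.card_le_card_of_injOn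
        (fun b => if d b c then ((b, c) : V × V) else (c, b))
      · intro b hb
        rcases (hmemN c b).1 (hs hb) with h | h
        · simp [hD, h, Finset.mem_coe.mp hb]
        · have hnbc : ¬ d b c := hasym _ _ h
          simp [hD, hnbc, h, Finset.mem_coe.mp hb]
      · intro a ha b hb hab
        simp only [Finset.mem_coe] at ha hb
        dsimp only at hab
        by_cases h1 : d a c <;> by_cases h2 : d b c
        · rw [if_pos h1, if_pos h2] at hab
          exact (Prod.ext_iff.mp hab).1
        · rw [if_pos h1, if_neg h2] at hab
          have : a = c := (Prod.ext_iff.mp hab).1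
          exact absurd (this ▸ ha) hcs
        · rw [if_neg h1, if_pos h2] at hab
          have : c = b := (Prod.ext_iff.mp hab).1
          exact absurd (this ▸ hb) hcs
        · rw [if_neg h1, if_neg h2] at hab
          exact (Prod.ext_iff.mp hab).2
    omega
  -- the target Finset of triads
  set T : Finset (Finset V) :=
    Finset.univ.filter (fun t => t.card = 3 ∧ (covCount d t = 2 ∨ covCount d t = 3)) with hT
  -- the cherry set
  set S : Finset ((_ : V) × Finset V) :=
    Finset.univ.sigma (fun c => (N c).powersetCard 2) with hS
  have hLHS : ∑ c : V, Nat.choose (degDir d c) 2 = S.card := by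
    rw [hS, Finset.card_sigma]
    exact Finset.sum_congr rfl (fun c _ => by
      rw [Finset.card_powersetCard, hdeg])
  have hmapsto : ∀ x ∈ S, insert x.1 x.2 ∈ T := by
    rintro ⟨c, s⟩ hx
    simp only [hS, Finset.mem_sigma, Finset.mem_powersetCard] at hx
    obtain ⟨-, hsub, hs2⟩ := hx
    have hcs : c ∉ s := fun h => hcnotN c (hsub h)
    have hcard : (insert c s).card = 3 := by
      rw [Finset.card_insert_of_notMem hcs, hs2]
    have h2 := hcov_ge c s hsub hs2
    have h3 := hcov_le _ hcard
    simp only [hT, Finset.mem_filter, Finset.mem_univ, true_and]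
    exact ⟨hcard, by omega⟩
  have hfiber : ∀ t ∈ T, (S.filter (fun x => insert x.1 x.2 = t)).card ≤ 3 := by
    intro t ht
    have htc : t.card = 3 := by
      simp only [hT, Finset.mem_filter] at ht; exact ht.2.1
    have : (S.filter (fun x => insert x.1 x.2 = t)).card ≤ t.card := by
      apply Finset.card_le_card_of_injOn (fun x => x.1)
      · rintro ⟨c, s⟩ hx
        simp only [Finset.mem_coe, Finset.mem_filter] at hx
        exact hx.2 ▸ Finset.mem_insert_self c s
      · rintro ⟨c, s⟩ ha ⟨c', s'⟩ hb h
        simp only [Finset.mem_coe, Finset.mem_filter, hS, Finset.mem_sigma,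
          Finset.mem_powersetCard] at ha hb
        dsimp at h
        subst h
        have hcs : c ∉ s := fun hh => hcnotN c (ha.1.2.1 hh)
        have hcs' : c ∉ s' := fun hh => hcnotN c (hb.1.2.1 hh)
        have : s = s' := by
          have e1 : (insert c s).erase c = (insert c s').erase c := by
            rw [ha.2, hb.2]
          rwa [Finset.erase_insert hcs, Finset.erase_insert hcs'] at e1
        subst this
        rfl
    omega
  have key : S.card ≤ 3 * T.card :=
    Finset.card_le_mul_card_image_of_maps_to hmapsto 3 hfiber
  have hRHS : {t : Finset V | t.card = 3 ∧ covCount d t = 2}.ncard +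
      {t : Finset V | t.card = 3 ∧ covCount d t = 3}.ncard = T.card := by
    rw [Set.ncard_eq_toFinset_card', Set.ncard_eq_toFinset_card']
    simp only [Set.toFinset_setOf]
    rw [← Finset.card_union_of_disjoint]
    · congr 1
      ext t
      simp only [Finset.mem_union, Finset.mem_filter, Finset.mem_univ, true_and, hT]
      tauto
    · rw [Finset.disjoint_left]
      intro t h1 h2
      simp only [Finset.mem_filter] at h1 h2
      omega
  rw [hLHS, hRHS]
  exact key
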